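/- Let G be a finite group that is a central product of A and B. If HK ∈ CD(G) for some H ≤ A and K ≤ B, then m*(G)·|A ∩ B|² = m*(A)·m*(B), and H(A∩B) ∈ CD(A) and K(A∩B) ∈ CD(B). -/
import Mathlib

open scoped Pointwise

/-- Relative Chermak–Delgado measure `m_W(K) = |K| * |C_W(K)|`. -/
noncomputable def m {G : Type*} [Group G] (W K : Subgroup G) : ℕ :=
  Nat.card K * Nat.card (W ⊓ Subgroup.centralizer (K : Set G) : Subgroup G)

/-- The Chermak–Delgado lattice of `W`: subgroups of `W` maximizing `m W`. -/
def CD {G : Type*} [Group G] (W : Subgroup G) : Set (Subgroup G) :=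
  {K | K ≤ W ∧ ∀ L ≤ W, m W L ≤ m W K}

/-- `m*(W)`, the maximal Chermak–Delgado measure over subgroups of `W`. -/
noncomputable def mstar {G : Type*} [Group G] (W : Subgroup G) : ℕ :=
  ⨆ K : {K : Subgroup G // K ≤ W}, m W K

open Subgroup

/-- Product formula for commuting subgroups. -/
lemma aux_card_sup_inf {G : Type*} [Group G] [Finite G] (X Y : Subgroup G)
    (h : ∀ x ∈ X, ∀ y ∈ Y, x * y = y * x) :
    Nat.card (X ⊔ Y : Subgroup G) * Nat.card (X ⊓ Y : Subgroup G)
      = Nat.card X * Nat.card Y := by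
  have hc : ∀ (x : X) (y : Y), Commute (X.subtype x) (Y.subtype y) :=
    fun x y => h x x.2 y y.2
  set φ : X × Y →* G := MonoidHom.noncommCoprod X.subtype Y.subtype hc with hφ
  have hφapp : ∀ p : X × Y, φ p = (p.1 : G) * (p.2 : G) := fun p => rfl
  have hrange : φ.range = X ⊔ Y := by
    apply le_antisymm
    · rintro g ⟨⟨x, y⟩, rfl⟩
      rw [hφapp]
      exact mul_mem (SetLike.le_def.mp le_sup_left x.2) (SetLike.le_def.mp le_sup_right y.2)
    · rw [sup_le_iff]
      constructor
      · intro x hx; exact ⟨(⟨x, hx⟩, 1), by simp [hφapp]⟩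
      · intro y hy; exact ⟨(1, ⟨y, hy⟩), by simp [hφapp]⟩
  have hkercard : Nat.card φ.ker = Nat.card (X ⊓ Y : Subgroup G) := by
    apply Nat.card_congr
    refine ⟨fun k => ⟨(k.1.1 : G), Subgroup.mem_inf.mpr ⟨k.1.1.2, ?_⟩⟩,
      fun z => ⟨(⟨z.1, (Subgroup.mem_inf.mp z.2).1⟩,
        ⟨z.1⁻¹, inv_mem (Subgroup.mem_inf.mp z.2).2⟩), ?_⟩, ?_, ?_⟩
    · have hk : ((k.1.1 : G)) * ((k.1.2 : G)) = 1 := k.2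
      have h2 : (k.1.1 : G) = (k.1.2 : G)⁻¹ := eq_inv_of_mul_eq_one_left hk
      rw [h2]; exact inv_mem k.1.2.2
    · show (z.1 : G) * (z.1)⁻¹ = 1
      exact mul_inv_cancel _
    · intro k
      apply Subtype.ext
      apply Prod.ext
      · exact Subtype.ext rfl
      · apply Subtype.ext
        have hk : ((k.1.1 : G)) * ((k.1.2 : G)) = 1 := k.2
        exact (eq_inv_of_mul_eq_one_right hk).symm
    · intro z; exact Subtype.ext rfl
  have h1 : Nat.card (X × Y) = Nat.card ((X × Y) ⧸ φ.ker) * Nat.card φ.ker :=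
    Subgroup.card_eq_card_quotient_mul_card_subgroup φ.ker
  have h2 : Nat.card ((X × Y) ⧸ φ.ker) = Nat.card φ.range :=
    Nat.card_congr (QuotientGroup.quotientKerEquivRange φ).toEquiv
  rw [h2, hrange, hkercard] at h1
  rw [← h1, Nat.card_prod]

lemma aux_centralizer_sup {G : Type*} [Group G] (X Y : Subgroup G) :
    centralizer ((X ⊔ Y : Subgroup G) : Set G)
      = centralizer (X : Set G) ⊓ centralizer (Y : Set G) := by
  apply le_antisymm
  · exact le_inf (centralizer_le (SetLike.coe_subset_coe.mpr le_sup_left))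
      (centralizer_le (SetLike.coe_subset_coe.mpr le_sup_right))
  · intro g hg
    rw [mem_centralizer_iff]
    intro h hh
    have hle : X ⊔ Y ≤ centralizer {g} := by
      apply sup_le
      · intro x hx
        rw [mem_centralizer_iff]
        rintro k rfl
        exact (mem_centralizer_iff.mp hg.1 x hx).symm
      · intro y hy
        rw [mem_centralizer_iff]
        rintro k rfl
        exact (mem_centralizer_iff.mp hg.2 y hy).symm
    exact (mem_centralizer_iff.mp (hle hh) g rfl).symm

lemma mstar_ge {G : Type*} [Group G] [Finite G] (W L : Subgroup G) (hL : L ≤ W) :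
    m W L ≤ mstar W := by
  have : Finite (Subgroup G) :=
    Finite.of_injective (fun H : Subgroup G => (H : Set G)) SetLike.coe_injective
  exact le_ciSup (f := fun K : {K : Subgroup G // K ≤ W} => m W K)
    (Set.Finite.bddAbove (Set.finite_range _)) ⟨L, hL⟩

lemma mstar_exists {G : Type*} [Group G] [Finite G] (W : Subgroup G) :
    ∃ X ≤ W, m W X = mstar W := by
  have : Finite (Subgroup G) :=
    Finite.of_injective (fun H : Subgroup G => (H : Set G)) SetLike.coe_injective
  have hne : Nonempty {K : Subgroup G // K ≤ W} := ⟨⟨⊥, bot_le⟩⟩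
  obtain ⟨⟨X, hX⟩, hmax⟩ := Finite.exists_max (fun K : {K : Subgroup G // K ≤ W} => m W K)
  exact ⟨X, hX, le_antisymm (mstar_ge W X hX) (ciSup_le fun K => hmax K)⟩

theorem stmt10 {G : Type*} [Group G] [Finite G] (A B H K : Subgroup G)
    (hG : ∀ g : G, ∃ a ∈ A, ∃ b ∈ B, g = a * b)
    (hcomm : ∀ a ∈ A, ∀ b ∈ B, a * b = b * a)
    (hHA : H ≤ A) (hKB : K ≤ B)
    (hHK : H ⊔ K ∈ CD (⊤ : Subgroup G)) :
    mstar (⊤ : Subgroup G) * Nat.card ↥(A ⊓ B) ^ 2 = mstar A * mstar B ∧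
      H ⊔ (A ⊓ B) ∈ CD A ∧ K ⊔ (A ⊓ B) ∈ CD B := by
  set Z := A ⊓ B with hZdef
  -- Z is central
  have hZc : ∀ z ∈ Z, ∀ g : G, z * g = g * z := by
    intro z hz g
    obtain ⟨a, ha, b, hb, rfl⟩ := hG g
    have h1 : a * z = z * a := hcomm a ha z (Subgroup.mem_inf.mp hz).2
    have h2 : z * b = b * z := hcomm z (Subgroup.mem_inf.mp hz).1 b hb
    rw [← mul_assoc, ← h1, mul_assoc, h2, ← mul_assoc]
  have hZle : ∀ S : Set G, Z ≤ centralizer S := fun S z hz =>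
    mem_centralizer_iff.mpr fun h _ => (hZc z hz h).symm
  have hZcent : ∀ L : Subgroup G,
      centralizer ((L ⊔ Z : Subgroup G) : Set G) = centralizer (L : Set G) := by
    intro L
    rw [aux_centralizer_sup]
    have hZt : centralizer (Z : Set G) = ⊤ :=
      le_antisymm le_top (fun g _ => mem_centralizer_iff.mpr fun h hh => hZc h hh g)
    rw [hZt, inf_top_eq]
  have hcardmono : ∀ X Y : Subgroup G, X ≤ Y → Nat.card X ≤ Nat.card Y := fun X Y h =>
    Nat.card_le_card_of_injective (Subgroup.inclusion h) (Subgroup.inclusion_injective h)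
  have hmZ : ∀ W L : Subgroup G, m W L ≤ m W (L ⊔ Z) := by
    intro W L
    show Nat.card L * _ ≤ Nat.card (L ⊔ Z : Subgroup G) * _
    rw [hZcent L]
    exact Nat.mul_le_mul_right _ (hcardmono _ _ le_sup_left)
  -- decomposition of centralizers
  have hD : ∀ X Y : Subgroup G, X ≤ A → Y ≤ B →
      (⊤ : Subgroup G) ⊓ centralizer ((X ⊔ Y : Subgroup G) : Set G)
        = (A ⊓ centralizer (X : Set G)) ⊔ (B ⊓ centralizer (Y : Set G)) := by
    intro X Y hXA hYB
    rw [top_inf_eq, aux_centralizer_sup]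
    apply le_antisymm
    · intro g hg
      obtain ⟨a, ha, b, hb, hab⟩ := hG g
      have hbX : b ∈ centralizer (X : Set G) :=
        mem_centralizer_iff.mpr fun h hh => hcomm h (hXA hh) b hb
      have haY : a ∈ centralizer (Y : Set G) :=
        mem_centralizer_iff.mpr fun h hh => (hcomm a ha h (hYB hh)).symm
      have haX : a ∈ centralizer (X : Set G) := by
        have h2 : a = g * b⁻¹ := by rw [hab]; group
        rw [h2]; exact mul_mem hg.1 (inv_mem hbX)
      have hbY : b ∈ centralizer (Y : Set G) := by
        have h2 : b = a⁻¹ * g := by rw [hab]; group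
        rw [h2]; exact mul_mem (inv_mem haY) hg.2
      rw [hab]
      exact mul_mem (SetLike.le_def.mp le_sup_left (Subgroup.mem_inf.mpr ⟨ha, haX⟩))
        (SetLike.le_def.mp le_sup_right (Subgroup.mem_inf.mpr ⟨hb, hbY⟩))
    · apply sup_le
      · refine le_inf inf_le_right ?_
        intro a ha
        have ha' := Subgroup.mem_inf.mp ha
        exact mem_centralizer_iff.mpr fun h hh => (hcomm a ha'.1 h (hYB hh)).symm
      · refine le_inf ?_ inf_le_right
        intro b hb
        have hb' := Subgroup.mem_inf.mp hb
        exact mem_centralizer_iff.mpr fun h hh => hcomm h (hXA hh) b hb'.1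
  have hinf1 : ∀ X Y : Subgroup G, X ≤ A → Y ≤ B → Z ≤ X → Z ≤ Y → X ⊓ Y = Z :=
    fun X Y hXA hYB h1 h2 => le_antisymm (inf_le_inf hXA hYB) (le_inf h1 h2)
  have hinf2 : ∀ X Y : Subgroup G,
      (A ⊓ centralizer (X : Set G)) ⊓ (B ⊓ centralizer (Y : Set G)) = Z := by
    intro X Y
    apply le_antisymm
    · exact le_inf (inf_le_left.trans inf_le_left) (inf_le_right.trans inf_le_left)
    · exact le_inf (le_inf inf_le_left (hZle _)) (le_inf inf_le_right (hZle _))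
  -- the main identity
  have hM : ∀ X Y : Subgroup G, X ≤ A → Y ≤ B → Z ≤ X → Z ≤ Y →
      m ⊤ (X ⊔ Y) * Nat.card Z ^ 2 = m A X * m B Y := by
    intro X Y hXA hYB hZX hZY
    have e1 := aux_card_sup_inf X Y (fun x hx y hy => hcomm x (hXA hx) y (hYB hy))
    have e2 := aux_card_sup_inf (A ⊓ centralizer (X : Set G)) (B ⊓ centralizer (Y : Set G))
      (fun x hx y hy => hcomm x (Subgroup.mem_inf.mp hx).1 y (Subgroup.mem_inf.mp hy).1)
    rw [hinf1 X Y hXA hYB hZX hZY] at e1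
    rw [hinf2 X Y] at e2
    show Nat.card (X ⊔ Y : Subgroup G) * _ * _ = _
    rw [hD X Y hXA hYB, pow_two, mul_mul_mul_comm, e1, e2, mul_mul_mul_comm]
    rfl
  -- setup
  have hH'A : H ⊔ Z ≤ A := sup_le hHA inf_le_left
  have hK'B : K ⊔ Z ≤ B := sup_le hKB inf_le_right
  have hmtop : m ⊤ (H ⊔ K) = mstar (⊤ : Subgroup G) := by
    obtain ⟨X0, hX0, hX0m⟩ := mstar_exists (⊤ : Subgroup G)
    exact le_antisymm (mstar_ge _ _ le_top) (hX0m ▸ hHK.2 X0 le_top)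
  have hsup : (H ⊔ Z) ⊔ (K ⊔ Z) = (H ⊔ K) ⊔ Z := by
    rw [sup_sup_sup_comm, sup_idem]
  have hm' : m ⊤ ((H ⊔ Z) ⊔ (K ⊔ Z)) = mstar (⊤ : Subgroup G) := by
    refine le_antisymm (mstar_ge _ _ le_top) ?_
    rw [← hmtop, hsup]
    exact hmZ ⊤ (H ⊔ K)
  have key1 : mstar (⊤ : Subgroup G) * Nat.card Z ^ 2 = m A (H ⊔ Z) * m B (K ⊔ Z) := by
    rw [← hm']
    exact hM (H ⊔ Z) (K ⊔ Z) hH'A hK'B le_sup_right le_sup_right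
  have hle1 : mstar (⊤ : Subgroup G) * Nat.card Z ^ 2 ≤ mstar A * mstar B := by
    rw [key1]
    exact Nat.mul_le_mul (mstar_ge A _ hH'A) (mstar_ge B _ hK'B)
  obtain ⟨X0, hX0A, hX0⟩ := mstar_exists A
  obtain ⟨Y0, hY0B, hY0⟩ := mstar_exists B
  have hX0' : m A (X0 ⊔ Z) = mstar A :=
    le_antisymm (mstar_ge A _ (sup_le hX0A inf_le_left)) (hX0 ▸ hmZ A X0)
  have hY0' : m B (Y0 ⊔ Z) = mstar B :=
    le_antisymm (mstar_ge B _ (sup_le hY0B inf_le_right)) (hY0 ▸ hmZ B Y0)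
  have hge : mstar A * mstar B ≤ mstar (⊤ : Subgroup G) * Nat.card Z ^ 2 := by
    rw [← hX0', ← hY0',
      ← hM (X0 ⊔ Z) (Y0 ⊔ Z) (sup_le hX0A inf_le_left) (sup_le hY0B inf_le_right)
        le_sup_right le_sup_right]
    exact Nat.mul_le_mul_right _ (mstar_ge _ _ le_top)
  have main : mstar (⊤ : Subgroup G) * Nat.card Z ^ 2 = mstar A * mstar B :=
    le_antisymm hle1 hge
  have hprod : m A (H ⊔ Z) * m B (K ⊔ Z) = mstar A * mstar B := by
    rw [← key1, main]
  have hmpos : ∀ W L : Subgroup G, 0 < m W L := fun W L =>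
    Nat.mul_pos Nat.card_pos Nat.card_pos
  have hApos : 0 < mstar A := lt_of_lt_of_le (hmpos A ⊥) (mstar_ge A ⊥ bot_le)
  have hBpos : 0 < mstar B := lt_of_lt_of_le (hmpos B ⊥) (mstar_ge B ⊥ bot_le)
  have h1 : m A (H ⊔ Z) = mstar A := by
    by_contra hne
    have hlt : m A (H ⊔ Z) < mstar A := lt_of_le_of_ne (mstar_ge A _ hH'A) hne
    have : m A (H ⊔ Z) * m B (K ⊔ Z) < mstar A * mstar B :=
      lt_of_le_of_lt (Nat.mul_le_mul le_rfl (mstar_ge B _ hK'B))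
        (mul_lt_mul_of_pos_right hlt hBpos)
    exact absurd hprod (ne_of_lt this)
  have h2 : m B (K ⊔ Z) = mstar B := by
    by_contra hne
    have hlt : m B (K ⊔ Z) < mstar B := lt_of_le_of_ne (mstar_ge B _ hK'B) hne
    have : m A (H ⊔ Z) * m B (K ⊔ Z) < mstar A * mstar B :=
      lt_of_le_of_lt (Nat.mul_le_mul (mstar_ge A _ hH'A) le_rfl)
        (mul_lt_mul_of_pos_left hlt hApos)
    exact absurd hprod (ne_of_lt this)
  exact ⟨main, ⟨hH'A, fun L hL => h1 ▸ mstar_ge A L hL⟩,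
    ⟨hK'B, fun L hL => h2 ▸ mstar_ge B L hL⟩⟩
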